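/- For any finite symmetric group S_n with n ≥ 4 and any complex irreducible character χ of S_n, at least one of the values χ at a transposition, χ at a 3-cycle, and χ at a double transposition is nonzero. -/

import Mathlib

open CategoryTheory Equiv Equiv.Perm Module

lemma isSwap_of_cycleType {α : Type*} [Fintype α] [DecidableEq α] {σ : Perm α}
    (h : σ.cycleType = {2}) : σ.IsSwap := by
  rw [← card_support_eq_two, ← sum_cycleType, h]; rfl

lemma cycleType_swap'' {α : Type*} [Fintype α] [DecidableEq α] {a b : α} (h : a ≠ b) :
    (Equiv.swap a b).cycleType = {2} := by
  rw [(isCycle_swap h).cycleType, support_swap h]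
  simp [h]

lemma swap_mul_swap_class {α : Type*} [Fintype α] [DecidableEq α] {σ τ : Perm α}
    (hσ : σ.IsSwap) (hτ : τ.IsSwap) :
    σ * τ = 1 ∨ (σ * τ).cycleType = {3} ∨ (σ * τ).cycleType = {2, 2} := by
  obtain ⟨a, b, hab, rfl⟩ := hσ
  obtain ⟨c, d, hcd, rfl⟩ := hτ
  by_cases hac : a = c
  · subst hac
    by_cases hbd : b = d
    · subst hbd; left; exact swap_mul_self a b
    · exact Or.inr (Or.inl (isThreeCycle_swap_mul_swap_same hab hcd hbd))
  · by_cases had : a = d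
    · subst had
      rw [swap_comm c a]
      by_cases hbc : b = c
      · subst hbc; left; exact swap_mul_self a b
      · exact Or.inr (Or.inl (isThreeCycle_swap_mul_swap_same hab (Ne.symm hcd) hbc))
    · by_cases hbc : b = c
      · subst hbc
        rw [swap_comm a b]
        by_cases had' : a = d
        · exact absurd had' had
        · exact Or.inr (Or.inl (isThreeCycle_swap_mul_swap_same (Ne.symm hab) hcd had'))
      · by_cases hbd : b = d
        · subst hbd
          rw [swap_comm a b, swap_comm c b]
          exact Or.inr (Or.inl (isThreeCycle_swap_mul_swap_same (Ne.symm hab) (Ne.symm hcd) hac))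
        · -- disjoint case
          have hdisj : Equiv.Perm.Disjoint (swap a b) (swap c d) := by
            rw [disjoint_iff_disjoint_support, support_swap hab, support_swap hcd]
            simp [Finset.disjoint_left, hac, had, hbc, hbd]
          right; right
          rw [hdisj.cycleType_mul, cycleType_swap'' hab, cycleType_swap'' hcd]
          rfl

/-- For `n ≥ 4` and any complex irreducible character of `S_n`, at least one of its values
at a transposition, a 3-cycle, and a double transposition is nonzero. -/
theorem stmt2 (n : ℕ) (hn : 4 ≤ n) (V : FDRep ℂ (Equiv.Perm (Fin n)))
    [CategoryTheory.Simple V]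
    (t c d : Equiv.Perm (Fin n)) (ht : t.cycleType = {2}) (hc : c.cycleType = {3})
    (hd : d.cycleType = {2, 2}) :
    V.character t ≠ 0 ∨ V.character c ≠ 0 ∨ V.character d ≠ 0 := by
  classical
  by_contra hcon
  push_neg at hcon
  obtain ⟨h1, h2, h3⟩ := hcon
  -- character is a class function
  have hclass : ∀ σ τ : Perm (Fin n), σ.cycleType = τ.cycleType →
      V.character σ = V.character τ := by
    intro σ τ h
    obtain ⟨g, hg⟩ := isConj_iff.mp (isConj_iff_cycleType_eq.mpr h)
    rw [← hg]
    exact (V.char_conj σ g).symm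
  -- dimension is nonzero
  have hdim : (finrank ℂ V : ℂ) ≠ 0 := by
    have : finrank ℂ V ≠ 0 := by
      intro h0
      have hsub : Subsingleton V := Module.finrank_zero_iff.mp h0
      have hz : (𝟙 V : V ⟶ V) = 0 := by
        apply Action.hom_ext
        ext v
        exact @Subsingleton.elim _ hsub _ _
      exact CategoryTheory.id_nonzero V hz
    exact_mod_cast this
  set S : Finset (Perm (Fin n)) := Finset.univ.filter (fun σ => σ.cycleType = {2}) with hSdef
  have htS : t ∈ S := by simp [hSdef, ht]
  have hSmem : ∀ σ, σ ∈ S ↔ σ.cycleType = {2} := by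
    intro σ; simp [hSdef]
  -- the sum of transpositions as a linear map
  set T : V →ₗ[ℂ] V := ∑ σ ∈ S, V.ρ σ with hTdef
  have hT : ∀ g : Perm (Fin n), V.ρ g * T = T * V.ρ g := by
    intro g
    rw [hTdef, Finset.mul_sum, Finset.sum_mul]
    have : ∀ σ ∈ S, V.ρ g * V.ρ σ = V.ρ (g * σ * g⁻¹) * V.ρ g := by
      intro σ _
      rw [← map_mul, ← map_mul]
      congr 1
      group
    rw [Finset.sum_congr rfl this]
    refine Finset.sum_nbij' (fun σ => g * σ * g⁻¹) (fun σ => g⁻¹ * σ * g) ?_ ?_ ?_ ?_ ?_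
    · intro σ hσ
      rw [hSmem] at hσ ⊢
      rw [cycleType_conj, hσ]
    · intro σ hσ
      rw [hSmem] at hσ ⊢
      rw [show g⁻¹ * σ * g = g⁻¹ * σ * g⁻¹⁻¹ by group, cycleType_conj, hσ]
    · intro σ _; group
    · intro σ _; group
    · intro σ _; rfl
  -- bundle T as a morphism of representations
  let f : V ⟶ V := ⟨FGModuleCat.ofHom T, fun g => by
    ext v
    exact (LinearMap.congr_fun (hT g) v).symm⟩
  obtain ⟨μ, hμ⟩ := CategoryTheory.endomorphism_simple_eq_smul_id ℂ f
  have hThom : T = μ • (LinearMap.id : V →ₗ[ℂ] V) := by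
    have := congrArg (fun φ => φ.hom.hom.hom) hμ
    exact this.symm
  -- trace of T is zero
  have htr : LinearMap.trace ℂ V T = 0 := by
    rw [hTdef, map_sum]
    apply Finset.sum_eq_zero
    intro σ hσ
    rw [hSmem] at hσ
    exact (hclass σ t (hσ.trans ht.symm)).trans h1
  have hμ0 : μ = 0 := by
    rw [hThom, LinearMap.map_smul, LinearMap.trace_id] at htr
    have := mul_eq_zero.mp htr
    tauto
  have hT0 : T = 0 := by rw [hThom, hμ0, zero_smul]
  -- but trace of T ∘ T is |S| * dim ≠ 0
  have hsq : LinearMap.trace ℂ V (T * T) = (S.card : ℂ) * (finrank ℂ V : ℂ) := by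
    rw [hTdef, Finset.sum_mul_sum]
    rw [map_sum]
    have : ∀ σ ∈ S, (LinearMap.trace ℂ V) (∑ τ ∈ S, V.ρ σ * V.ρ τ) = (finrank ℂ V : ℂ) := by
      intro σ hσ
      rw [map_sum]
      have hterm : ∀ τ ∈ S, (LinearMap.trace ℂ V) (V.ρ σ * V.ρ τ)
          = if τ = σ⁻¹ then (finrank ℂ V : ℂ) else 0 := by
        intro τ hτ
        rw [← map_mul]
        have : (LinearMap.trace ℂ V) (V.ρ (σ * τ)) = V.character (σ * τ) := rfl
        rw [this]
        by_cases he : τ = σ⁻¹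
        · subst he
          rw [mul_inv_cancel]
          simp
        · rcases swap_mul_swap_class (isSwap_of_cycleType ((hSmem σ).mp hσ))
            (isSwap_of_cycleType ((hSmem τ).mp hτ)) with h | h | h
          · exact absurd (eq_inv_of_mul_eq_one_right h) he
          · rw [if_neg he]
            exact (hclass _ c (h.trans hc.symm)).trans h2
          · rw [if_neg he]
            exact (hclass _ d (h.trans hd.symm)).trans h3
      rw [Finset.sum_congr rfl hterm, Finset.sum_ite_eq' S σ⁻¹ (fun _ => (finrank ℂ V : ℂ))]
      rw [if_pos]
      rw [hSmem, cycleType_inv]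
      exact (hSmem σ).mp hσ
    rw [Finset.sum_congr rfl this, Finset.sum_const, nsmul_eq_mul]
  rw [hT0, mul_zero, map_zero] at hsq
  have hScard : (S.card : ℂ) ≠ 0 := by
    have : S.Nonempty := ⟨t, htS⟩
    exact_mod_cast Finset.card_ne_zero_of_mem htS
  exact (mul_ne_zero hScard hdim) hsq.symm
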